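/- Let φ : [A,B] → ℝ≥0 be convex with minimizer x* ∈ [A,B], let W_A ⊆ [A,x*] and W_B ⊆ [x*,B] be finite sets containing the respective interval endpoints whose induced convex extensions K-approximate φ on [A,x*] and [x*,B] respectively, and suppose additionally that φ(ℓ) ≤ K·φ(x*) and φ(r) ≤ K·φ(x*), where ℓ = max{x ∈ W_A} with ℓ ≤ x* and r = min{x ∈ W_B} with r ≥ x*. Then the convex extension of φ induced by W := W_A ∪ W_B is a K-approximation of φ on all of [A,B]. -/

import Mathlib

open Set

/-- The convex extension of φ induced by a finite set E: the lower envelope of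
the convex hull of {(x, φ(x)) : x ∈ E}. -/
noncomputable def convExt (φ : ℝ → ℝ) (E : Finset ℝ) (x : ℝ) : ℝ :=
  sInf {y : ℝ | (x, y) ∈ convexHull ℝ ((fun e => (e, φ e)) '' (E : Set ℝ))}

/-- Gluing two K-approximation sets of a convex function at a minimizer yields a
K-approximation set on the whole interval. -/
theorem glue_approx_sets (A B xstar K : ℝ) (hK : 1 ≤ K)
    (hA : A ≤ xstar) (hB : xstar ≤ B)
    (φ : ℝ → ℝ) (hconv : ConvexOn ℝ (Icc A B) φ)
    (hnonneg : ∀ x ∈ Icc A B, 0 ≤ φ x)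
    (hmin : ∀ x ∈ Icc A B, φ xstar ≤ φ x)
    (W_A W_B : Finset ℝ)
    (hWA : (W_A : Set ℝ) ⊆ Icc A xstar) (hWB : (W_B : Set ℝ) ⊆ Icc xstar B)
    (hAin : A ∈ W_A) (hBin : B ∈ W_B)
    (hWAne : W_A.Nonempty) (hWBne : W_B.Nonempty)
    (hapxA : ∀ x ∈ Icc A xstar, φ x ≤ convExt φ W_A x ∧ convExt φ W_A x ≤ K * φ x)
    (hapxB : ∀ x ∈ Icc xstar B, φ x ≤ convExt φ W_B x ∧ convExt φ W_B x ≤ K * φ x)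
    (hl : φ (W_A.max' hWAne) ≤ K * φ xstar)
    (hr : φ (W_B.min' hWBne) ≤ K * φ xstar) :
    ∀ x ∈ Icc A B, φ x ≤ convExt φ (W_A ∪ W_B) x ∧
      convExt φ (W_A ∪ W_B) x ≤ K * φ x := by
  intro x hx
  set E := W_A ∪ W_B with hE
  set P : Finset ℝ → Set (ℝ × ℝ) :=
    fun F => convexHull ℝ ((fun e => (e, φ e)) '' (F : Set ℝ)) with hP
  have hEsub : (E : Set ℝ) ⊆ Icc A B := by
    intro z hz
    rcases Finset.mem_union.mp (Finset.mem_coe.mp hz) with h | h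
    · exact ⟨(hWA (Finset.mem_coe.mpr h)).1, le_trans (hWA (Finset.mem_coe.mpr h)).2 hB⟩
    · exact ⟨le_trans hA (hWB (Finset.mem_coe.mpr h)).1, (hWB (Finset.mem_coe.mpr h)).2⟩
  have hsub : P E ⊆ {p : ℝ × ℝ | p.1 ∈ Icc A B ∧ φ p.1 ≤ p.2} := by
    apply convexHull_min
    · rintro p ⟨e, he, rfl⟩
      exact ⟨hEsub he, le_refl _⟩
    · exact hconv.convex_epigraph
  have hlb : ∀ y ∈ {y : ℝ | (x, y) ∈ P E}, φ x ≤ y := fun y hy => (hsub hy).2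
  -- segment membership lemma
  have hmemseg : ∀ (F : Finset ℝ) (u v : ℝ), u ∈ F → v ∈ F → x ∈ Icc u v →
      ∃ y, (x, y) ∈ P F ∧ y ≤ max (φ u) (φ v) := by
    intro F u v hu hv hxuv
    have huv : u ≤ v := le_trans hxuv.1 hxuv.2
    rw [← segment_eq_Icc huv] at hxuv
    rcases hxuv with ⟨a, b, ha, hb, hab, hx'⟩
    refine ⟨a * φ u + b * φ v, ?_, ?_⟩
    · have h1 : ((u, φ u) : ℝ × ℝ) ∈ P F :=
        subset_convexHull ℝ _ ⟨u, Finset.mem_coe.mpr hu, rfl⟩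
      have h2 : ((v, φ v) : ℝ × ℝ) ∈ P F :=
        subset_convexHull ℝ _ ⟨v, Finset.mem_coe.mpr hv, rfl⟩
      have h3 := (convex_convexHull ℝ _) h1 h2 ha hb hab
      have h4 : a • ((u, φ u) : ℝ × ℝ) + b • (v, φ v) = (x, a * φ u + b * φ v) := by
        simp only [Prod.smul_mk, Prod.mk_add_mk, smul_eq_mul]
        rw [Prod.mk.injEq]
        exact ⟨by simpa [smul_eq_mul] using hx', rfl⟩
      rwa [h4] at h3
    · calc a * φ u + b * φ v ≤ a * max (φ u) (φ v) + b * max (φ u) (φ v) := by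
            gcongr
            · exact le_max_left _ _
            · exact le_max_right _ _
        _ = max (φ u) (φ v) := by rw [← add_mul, hab, one_mul]
  have hAE : A ∈ E := Finset.mem_union_left _ hAin
  have hBE : B ∈ E := Finset.mem_union_right _ hBin
  obtain ⟨y0, hy0, _⟩ := hmemseg E A B hAE hBE hx
  have hne : {y : ℝ | (x, y) ∈ P E}.Nonempty := ⟨y0, hy0⟩
  have hbdd : BddBelow {y : ℝ | (x, y) ∈ P E} := ⟨φ x, hlb⟩
  have hlow : φ x ≤ convExt φ E x := le_csInf hne hlb
  refine ⟨hlow, ?_⟩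
  set l := W_A.max' hWAne with hldef
  set r := W_B.min' hWBne with hrdef
  have hlmem : l ∈ Icc A xstar := hWA (Finset.mem_coe.mpr (W_A.max'_mem hWAne))
  have hrmem : r ∈ Icc xstar B := hWB (Finset.mem_coe.mpr (W_B.min'_mem hWBne))
  have hKpos : (0:ℝ) ≤ K := le_trans zero_le_one hK
  by_cases hxl : x ≤ l
  · -- use W_A
    have hxA : x ∈ Icc A xstar := ⟨hx.1, le_trans hxl hlmem.2⟩
    have h2 := (hapxA x hxA).2
    have hAl : A ∈ W_A := hAin
    obtain ⟨yA, hyA, _⟩ := hmemseg W_A A l hAl (W_A.max'_mem hWAne) ⟨hx.1, hxl⟩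
    have hmono : convExt φ E x ≤ convExt φ W_A x := by
      apply csInf_le_csInf hbdd ⟨yA, hyA⟩
      intro y hy
      exact convexHull_mono (Set.image_mono (by exact_mod_cast Finset.subset_union_left)) hy
    exact le_trans hmono h2
  · by_cases hxr : r ≤ x
    · -- use W_B
      have hxB : x ∈ Icc xstar B := ⟨le_trans hrmem.1 hxr, hx.2⟩
      have h2 := (hapxB x hxB).2
      obtain ⟨yB, hyB, _⟩ := hmemseg W_B r B (W_B.min'_mem hWBne) hBin ⟨hxr, hx.2⟩
      have hmono : convExt φ E x ≤ convExt φ W_B x := by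
        apply csInf_le_csInf hbdd ⟨yB, hyB⟩
        intro y hy
        exact convexHull_mono (Set.image_mono (by exact_mod_cast Finset.subset_union_right)) hy
      exact le_trans hmono h2
    · -- middle case: l < x < r
      push_neg at hxl hxr
      have hlE : l ∈ E := Finset.mem_union_left _ (W_A.max'_mem hWAne)
      have hrE : r ∈ E := Finset.mem_union_right _ (W_B.min'_mem hWBne)
      obtain ⟨y, hy, hybound⟩ := hmemseg E l r hlE hrE ⟨le_of_lt hxl, le_of_lt hxr⟩
      have h1 : convExt φ E x ≤ y := csInf_le hbdd hy
      have h2 : max (φ l) (φ r) ≤ K * φ xstar := max_le hl hr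
      have h3 : K * φ xstar ≤ K * φ x := by
        apply mul_le_mul_of_nonneg_left (hmin x hx) hKpos
      linarith
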